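/- For the four-agent contract choice problem G* defined below (the Gale–Shapley example with coalitions of size up to three allowed to match), the outcome (f*, v*) with f* = {{1,2,3},{4}}, v*(1) = v*(2) = v*(3) = 3 and v*(4) = 0 belongs to the core of G*. -/

import Mathlib

/-- An outcome for a contract choice problem with agent set `α` and feasible pay-off
sets `F S ⊆ ℝ^S` is a pair `(f, v)` where `f` is a partition of the agent set and
`v : α → ℝ` is a nonnegative pay-off function whose restriction to each cell `S ∈ f`
belongs to `F S`. -/
def IsOutcome {α : Type*} [Fintype α]
    (F : (S : Finset α) → Set ({a : α // a ∈ S} → ℝ))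
    (f : Finset (Finset α)) (v : α → ℝ) : Prop :=
  (∀ S ∈ f, S.Nonempty) ∧
  (∀ S ∈ f, ∀ T ∈ f, S ≠ T → Disjoint S T) ∧
  (∀ a : α, ∃ S ∈ f, a ∈ S) ∧
  (∀ a : α, 0 ≤ v a) ∧
  (∀ S ∈ f, (fun a : {a : α // a ∈ S} => v a.1) ∈ F S)

/-- A coalition `S` blocks the pay-off function `v` if `S` is nonempty and there is
`x ∈ F S` with `x a > v a` for all `a ∈ S`. -/
def Blocks {α : Type*}
    (F : (S : Finset α) → Set ({a : α // a ∈ S} → ℝ))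
    (S : Finset α) (v : α → ℝ) : Prop :=
  S.Nonempty ∧ ∃ x ∈ F S, ∀ a : {a : α // a ∈ S}, v a.1 < x a

/-- `C⁰(S)`: permutations `μ` of the agent set with `μ(S) = S` such that `μ(T) ≠ T`
for every nonempty proper subset `T` of `S`. -/
def C0 {α : Type*} [DecidableEq α] [Fintype α] (S : Finset α) :
    Set (Equiv.Perm α) :=
  {μ | Finset.image (⇑μ) S = S ∧
    ∀ T : Finset α, T.Nonempty → T ⊂ S → Finset.image (⇑μ) T ≠ T}

/-- The utilities of the four-agent Gale–Shapley example (agents `0,1,2,3` stand for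
agents `1,2,3,4` of the paper). -/
def u : Fin 4 → Fin 4 → ℝ :=
  ![![0, 3, 2, 1], ![2, 0, 3, 1], ![3, 2, 0, 1], ![3, 2, 1, 0]]

/-- The feasible pay-off sets of the modified example `G*`: for coalitions of size 1, 2
or 3, the pay-offs induced by reallocations `μ ∈ C⁰(S)`; otherwise the single
vector `-e^S`. -/
def Fstar (S : Finset (Fin 4)) : Set ({a : Fin 4 // a ∈ S} → ℝ) :=
  if S.card = 1 ∨ S.card = 2 ∨ S.card = 3 then
    {x | ∃ μ ∈ C0 S, ∀ a : {a : Fin 4 // a ∈ S}, x a = u a.1 (μ a.1)}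
  else
    {fun _ => -1}

/-- The coalition structure `f* = {{1,2,3},{4}}` of the paper (zero-indexed). -/
def fstar : Finset (Finset (Fin 4)) :=
  {({0, 1, 2} : Finset (Fin 4)), ({3} : Finset (Fin 4))}

/-- The pay-off function `v*(1)=v*(2)=v*(3)=3, v*(4)=0` of the paper (zero-indexed). -/
def vstar : Fin 4 → ℝ := ![3, 3, 3, 0]

/-- The outcome `(f*, v*)` with `f* = {{1,2,3},{4}}` and `v* = (3,3,3,0)` belongs to
the core of `G*`: it is an outcome and no coalition blocks it.

The 3-cycle (0 1 2) on `Fin 4`. -/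
def mu0 : Equiv.Perm (Fin 4) :=
  ⟨![1, 2, 0, 3], ![2, 0, 1, 3], by decide, by decide⟩

lemma u_le_three : ∀ a b : Fin 4, u a b ≤ 3 := by
  intro a b
  fin_cases a <;> fin_cases b <;> norm_num [u]

lemma mu0_mem : mu0 ∈ C0 ({0, 1, 2} : Finset (Fin 4)) := by
  constructor
  · decide
  · decide

lemma refl_mem : Equiv.refl (Fin 4) ∈ C0 ({3} : Finset (Fin 4)) := by
  constructor
  · decide
  · decide

theorem outcome_in_core_of_Gstar :
    IsOutcome Fstar fstar vstar ∧ ∀ S : Finset (Fin 4), ¬ Blocks Fstar S vstar := by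
  constructor
  · refine ⟨?_, ?_, ?_, ?_, ?_⟩
    · intro S hS
      simp only [fstar, Finset.mem_insert, Finset.mem_singleton] at hS
      rcases hS with h | h <;> subst h <;> decide
    · intro S hS T hT hne
      simp only [fstar, Finset.mem_insert, Finset.mem_singleton] at hS hT
      rcases hS with h | h <;> rcases hT with h' | h' <;> subst h <;> subst h' <;>
        first | (exact absurd rfl hne) | decide
    · intro a
      fin_cases a
      · exact ⟨{0,1,2}, by decide, by decide⟩
      · exact ⟨{0,1,2}, by decide, by decide⟩
      · exact ⟨{0,1,2}, by decide, by decide⟩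
      · exact ⟨{3}, by decide, by decide⟩
    · intro a
      fin_cases a <;> norm_num [vstar]
    · intro S hS
      simp only [fstar, Finset.mem_insert, Finset.mem_singleton] at hS
      rcases hS with h | h <;> subst h
      · have hcard : ({0, 1, 2} : Finset (Fin 4)).card = 3 := by decide
        rw [Fstar, if_pos (by decide)]
        refine ⟨mu0, mu0_mem, ?_⟩
        rintro ⟨a, ha⟩
        fin_cases ha <;> simp [vstar, u, mu0]
      · have hcard : ({3} : Finset (Fin 4)).card = 1 := by decide
        rw [Fstar, if_pos (by decide)]
        refine ⟨Equiv.refl (Fin 4), refl_mem, ?_⟩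
        rintro ⟨a, ha⟩
        have : a = 3 := by
          simpa using ha
        subst this
        simp [vstar, u]
  · rintro S ⟨hne, x, hx, hlt⟩
    by_cases hc : S.card = 1 ∨ S.card = 2 ∨ S.card = 3
    · rw [Fstar, if_pos hc] at hx
      obtain ⟨μ, hμ, hxa⟩ := hx
      by_cases h3 : ∃ a ∈ S, a ≠ 3
      · obtain ⟨a, ha, hane⟩ := h3
        have h1 := hlt ⟨a, ha⟩
        rw [hxa ⟨a, ha⟩] at h1
        have h2 : vstar a = 3 := by
          fin_cases a <;> simp_all [vstar]
        rw [h2] at h1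
        exact absurd (u_le_three a (μ a)) (not_le.mpr h1)
      · push_neg at h3
        have hS3 : S = {3} := by
          apply Finset.Subset.antisymm
          · intro a ha; simpa using h3 a ha
          · obtain ⟨b, hb⟩ := hne
            have := h3 b hb
            subst this
            simpa using hb
        subst hS3
        have hμ3 : μ 3 = 3 := by
          have h := hμ.1
          have : μ 3 ∈ ({3} : Finset (Fin 4)) := by
            rw [← h]
            exact Finset.mem_image_of_mem _ (by decide)
          simpa using this
        have h1 := hlt ⟨3, by decide⟩
        rw [hxa ⟨3, by decide⟩, hμ3] at h1
        simp [vstar, u] at h1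
    · rw [Fstar, if_neg hc] at hx
      obtain ⟨a, ha⟩ := hne
      have h1 := hlt ⟨a, ha⟩
      rw [hx] at h1
      simp only at h1
      have h2 : (0 : ℝ) ≤ vstar a := by
        fin_cases a <;> norm_num [vstar]
      linarith
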